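/- Let F = F_{2^n} and let E be as above (ordinary, a1 ≠ 0), with P = (x,y) ∈ E(F) not 2-torsion, b = a1(a1x + a3). Then Tr_{F/F_2}((b6·x + b8)/b²) = Tr_{F/F_2}((x + a2)/a1²), where b6 = a3² and b8 = a1²a6 + a1a3a4 + a2a3² + a4². Equivalently, using that Tr((x³ + a2x² + a4x + a6)/(a1x + a3)²) = 0 (since P lies on the curve), one has the algebraic identity (b6x + b8)/b² = (x + a2)/a1² + (x³ + a2x² + a4x + a6)/(a1x + a3)² + a4/b + (a4/b)² in F. -/

import Mathlib

noncomputable def frobAE (n : ℕ) : GaloisField 2 n ≃ₐ[ZMod 2] GaloisField 2 n :=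
  AlgEquiv.ofRingEquiv (f := frobeniusEquiv (GaloisField 2 n) 2)
    (fun c => by simp [frobenius_def, ← map_pow, ZMod.pow_card])

lemma trace_sq (n : ℕ) (w : GaloisField 2 n) :
    Algebra.trace (ZMod 2) (GaloisField 2 n) (w ^ 2) =
      Algebra.trace (ZMod 2) (GaloisField 2 n) w :=
  Algebra.trace_eq_of_algEquiv (frobAE n) w



/-- For an ordinary curve over `F = F_{2ⁿ}` with `P = (x,y) ∈ E(F)` not `2`-torsion and
`b = a₁(a₁x + a₃)`: `Tr_{F/F₂}((b₆x + b₈)/b²) = Tr_{F/F₂}((x + a₂)/a₁²)`, and one has the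
algebraic identity
`(b₆x + b₈)/b² = (x + a₂)/a₁² + (x³ + a₂x² + a₄x + a₆)/(a₁x + a₃)² + a₄/b + (a₄/b)²`. -/
theorem stmt_16 (n : ℕ) (hn : n ≠ 0) (a1 a2 a3 a4 a6 x y : GaloisField 2 n)
    (hcurve : y ^ 2 + a1 * x * y + a3 * y = x ^ 3 + a2 * x ^ 2 + a4 * x + a6)
    (ha1 : a1 ≠ 0) (h2tor : a1 * x + a3 ≠ 0) :
    let F := GaloisField 2 n
    let b : F := a1 * (a1 * x + a3)
    let b6 : F := a3 ^ 2
    let b8 : F := a1 ^ 2 * a6 + a1 * a3 * a4 + a2 * a3 ^ 2 + a4 ^ 2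
    Algebra.trace (ZMod 2) F ((b6 * x + b8) / b ^ 2) =
        Algebra.trace (ZMod 2) F ((x + a2) / a1 ^ 2) ∧
      (b6 * x + b8) / b ^ 2 =
        (x + a2) / a1 ^ 2 + (x ^ 3 + a2 * x ^ 2 + a4 * x + a6) / (a1 * x + a3) ^ 2 +
          a4 / b + (a4 / b) ^ 2 := by
  intro F b b6 b8
  haveI : CharP F 2 := inferInstanceAs (CharP (GaloisField 2 n) 2)
  have h2 : (2 : F) = 0 := by exact_mod_cast CharP.cast_eq_zero F 2
  have poly : b6 * x + b8 =
      (x + a2) * (a1 * x + a3) ^ 2 + a1 ^ 2 * (x ^ 3 + a2 * x ^ 2 + a4 * x + a6) +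
        a4 * a1 * (a1 * x + a3) + a4 ^ 2 := by
    show a3 ^ 2 * x + (a1 ^ 2 * a6 + a1 * a3 * a4 + a2 * a3 ^ 2 + a4 ^ 2) = _
    linear_combination (-(a1 ^ 2 * x ^ 3) - a2 * a1 ^ 2 * x ^ 2 - a1 ^ 2 * a4 * x - a1 * a3 * x ^ 2 - a1 * a2 * a3 * x) * h2
  have step : ((x + a2) * (a1 * x + a3) ^ 2 + a1 ^ 2 * (x ^ 3 + a2 * x ^ 2 + a4 * x + a6) +
        a4 * a1 * (a1 * x + a3) + a4 ^ 2) / (a1 * (a1 * x + a3)) ^ 2 =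
      (x + a2) / a1 ^ 2 + (x ^ 3 + a2 * x ^ 2 + a4 * x + a6) / (a1 * x + a3) ^ 2 +
        a4 / (a1 * (a1 * x + a3)) + (a4 / (a1 * (a1 * x + a3))) ^ 2 := by
    rw [div_add_div _ _ (pow_ne_zero 2 ha1) (pow_ne_zero 2 h2tor), div_add_div _ _ (by positivity) (mul_ne_zero ha1 h2tor), div_pow, div_add_div _ _ (by positivity) (by positivity), div_eq_div_iff (by positivity) (by positivity)]
    ring
  have key : (b6 * x + b8) / b ^ 2 =
      (x + a2) / a1 ^ 2 + (x ^ 3 + a2 * x ^ 2 + a4 * x + a6) / (a1 * x + a3) ^ 2 +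
        a4 / b + (a4 / b) ^ 2 := by
    rw [poly]; exact step
  refine ⟨?_, key⟩
  have hu : (x ^ 3 + a2 * x ^ 2 + a4 * x + a6) / (a1 * x + a3) ^ 2 =
      (y / (a1 * x + a3)) ^ 2 + y / (a1 * x + a3) := by
    rw [← hcurve]
    field_simp
    ring
  rw [key, hu]
  have h2' : (2 : ZMod 2) = 0 := by decide
  have e1 : Algebra.trace (ZMod 2) F ((y / (a1 * x + a3)) ^ 2) =
      Algebra.trace (ZMod 2) F (y / (a1 * x + a3)) := trace_sq n _
  have e2 : Algebra.trace (ZMod 2) F ((a4 / b) ^ 2) =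
      Algebra.trace (ZMod 2) F (a4 / b) := trace_sq n _
  simp only [map_add, e1, e2]
  linear_combination (Algebra.trace (ZMod 2) F (y / (a1 * x + a3)) +
    Algebra.trace (ZMod 2) F (a4 / b)) * h2'
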